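/- Every submodule of a free right module over a free associative algebra (tensor algebra) k⟨X⟩ over a field k is itself a free module. -/

import Mathlib

section ShortLex

variable {X : Type*} [LinearOrder X]

local notation "tl" => FreeMonoid.toList

/-- Shortlex linear order on the free monoid. -/
noncomputable instance shortLexLO : LinearOrder (FreeMonoid X) :=
  LinearOrder.lift' (fun w => toLex ((tl w).length, tl w))
    (fun a b h => by
      have := congrArg (fun p => (ofLex p).2) h
      exact FreeMonoid.toList.injective (by simpa using this))

lemma shortLex_lt_iff (a b : FreeMonoid X) :
    a < b ↔ (tl a).length < (tl b).length ∨
      ((tl a).length = (tl b).length ∧ List.Lex (· < ·) (tl a) (tl b)) := by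
  show toLex (((tl a).length), tl a) < toLex (((tl b).length), tl b) ↔ _
  rw [Prod.Lex.lt_iff]
  exact Iff.rfl.or (Iff.rfl.and ((List.lt_iff_lex_lt _ _).symm.trans (List.lt_iff_lex_lt _ _)))

lemma List.Lex.append_left' {l₁ l₂ : List X} (h : List.Lex (· < ·) l₁ l₂) (a : List X) :
    List.Lex (· < ·) (a ++ l₁) (a ++ l₂) := by
  induction a with
  | nil => simpa
  | cons x xs ih => exact List.Lex.cons ih

lemma List.Lex.append_right' {l₁ l₂ : List X} (h : List.Lex (· < ·) l₁ l₂)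
    (hlen : l₁.length = l₂.length) (a : List X) :
    List.Lex (· < ·) (l₁ ++ a) (l₂ ++ a) := by
  induction h with
  | nil => simp at hlen
  | rel h => exact List.Lex.rel h
  | cons h ih => exact List.Lex.cons (ih (by simpa using hlen))

lemma shortLex_mul_lt_mul_left (a : FreeMonoid X) {u v : FreeMonoid X} (h : u < v) :
    a * u < a * v := by
  rw [shortLex_lt_iff] at h ⊢
  rw [FreeMonoid.toList_mul, FreeMonoid.toList_mul]
  rcases h with h | ⟨h1, h2⟩
  · exact Or.inl (by simpa using h)
  · exact Or.inr ⟨by simp [h1], List.Lex.append_left' h2 _⟩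

lemma shortLex_mul_lt_mul_right (a : FreeMonoid X) {u v : FreeMonoid X} (h : u < v) :
    u * a < v * a := by
  rw [shortLex_lt_iff] at h ⊢
  rw [FreeMonoid.toList_mul, FreeMonoid.toList_mul]
  rcases h with h | ⟨h1, h2⟩
  · exact Or.inl (by simpa using h)
  · exact Or.inr ⟨by simp [h1], List.Lex.append_right' h2 h1 _⟩

lemma shortLex_one_le (w : FreeMonoid X) : 1 ≤ w := by
  rcases eq_or_ne w 1 with rfl | h
  · exact le_refl _
  · refine le_of_lt ?_
    rw [shortLex_lt_iff]
    refine Or.inl ?_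
    have : tl w ≠ [] := fun hc => h (FreeMonoid.toList.injective (by simpa using hc))
    simpa [FreeMonoid.toList_one] using List.length_pos_iff.2 this

lemma freeMonoid_mul_left_cancel {a b c : FreeMonoid X} (h : a * b = a * c) : b = c := by
  apply FreeMonoid.toList.injective
  have := congrArg tl h
  rw [FreeMonoid.toList_mul, FreeMonoid.toList_mul] at this
  exact List.append_cancel_left this

lemma freeMonoid_levi {a b c d : FreeMonoid X} (h : a * b = c * d) :
    ∃ t, a = c * t ∨ c = a * t := by
  have := congrArg tl h
  rw [FreeMonoid.toList_mul, FreeMonoid.toList_mul] at this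
  rcases List.append_eq_append_iff.1 this with ⟨a', ha, _⟩ | ⟨c', hc, _⟩
  · exact ⟨FreeMonoid.ofList a', Or.inr (FreeMonoid.toList.injective (by simpa using ha))⟩
  · exact ⟨FreeMonoid.ofList c', Or.inl (FreeMonoid.toList.injective (by simpa using hc))⟩

/-- Minimum extraction for `List.Lex` on sets of lists of fixed length. -/
lemma lex_has_min [WellFoundedLT X] :
    ∀ (n : ℕ) (S : Set (List X)), (∀ l ∈ S, l.length = n) → S.Nonempty →
      ∃ m ∈ S, ∀ l ∈ S, ¬ List.Lex (· < ·) l m := by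
  intro n
  induction n with
  | zero =>
    rintro S hlen ⟨l, hl⟩
    have : l = [] := List.length_eq_zero_iff.1 (hlen l hl)
    subst this
    refine ⟨[], hl, ?_⟩
    intro l' hl'
    have : l' = [] := List.length_eq_zero_iff.1 (hlen l' hl')
    subst this
    intro h; cases h
  | succ n ih =>
    rintro S hlen ⟨l, hl⟩
    set H : Set X := {a | ∃ t, a :: t ∈ S} with hH
    have hHne : H.Nonempty := by
      obtain ⟨a, t, rfl⟩ : ∃ a t, l = a :: t := by
        have := hlen l hl
        cases l with
        | nil => simp at this
        | cons a t => exact ⟨a, t, rfl⟩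
      exact ⟨a, t, hl⟩
    obtain ⟨a₀, ha₀, ha₀min⟩ := (wellFounded_lt (α := X)).has_min H hHne
    set T : Set (List X) := {t | a₀ :: t ∈ S} with hT
    have hTne : T.Nonempty := ha₀
    have hTlen : ∀ t ∈ T, t.length = n := by
      intro t ht
      have := hlen _ ht
      simpa using this
    obtain ⟨t₀, ht₀, ht₀min⟩ := ih T hTlen hTne
    refine ⟨a₀ :: t₀, ht₀, ?_⟩
    intro l' hl' hlex
    obtain ⟨a, t, rfl⟩ : ∃ a t, l' = a :: t := by
      have := hlen l' hl'
      cases l' with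
      | nil => simp at this
      | cons a t => exact ⟨a, t, rfl⟩
    cases hlex with
    | rel h => exact ha₀min a ⟨t, hl'⟩ h
    | cons h => exact ht₀min t hl' h

lemma shortLex_wellFoundedLT [WellFoundedLT X] : WellFoundedLT (FreeMonoid X) := by
  constructor
  rw [WellFounded.wellFounded_iff_has_min]
  intro S hS
  set lenS : Set ℕ := {n | ∃ l ∈ S, (tl l).length = n} with hlenS
  have hlne : lenS.Nonempty := ⟨_, hS.choose, hS.choose_spec, rfl⟩
  obtain ⟨n₀, hn₀, hn₀min⟩ := (wellFounded_lt (α := ℕ)).has_min lenS hlne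
  set S₀ : Set (List X) := {l | ∃ w ∈ S, tl w = l ∧ l.length = n₀} with hS₀
  have hS₀ne : S₀.Nonempty := by obtain ⟨w, hw, hwlen⟩ := hn₀; exact ⟨tl w, w, hw, rfl, hwlen⟩
  obtain ⟨m, hmS₀, hmmin⟩ :=
    lex_has_min n₀ S₀ (fun l hl => hl.choose_spec.2.2) hS₀ne
  obtain ⟨wm, hwm, hwmtl, hwmlen⟩ := hmS₀
  refine ⟨wm, hwm, ?_⟩
  intro w hw hlt
  rw [shortLex_lt_iff] at hlt
  rw [hwmtl] at hlt
  rcases hlt with h | ⟨h1, h2⟩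
  · rw [hwmlen] at h
    exact hn₀min _ ⟨w, hw, rfl⟩ h
  · exact hmmin (tl w) ⟨w, hw, rfl, by rw [h1, hwmlen]⟩ h2

end ShortLex


section Core

variable {k : Type*} [Field k] {W : Type*} [Monoid W] [LinearOrder W]
variable {ι : Type*} [LinearOrder ι]

/-- The coefficient of `f` at the monomial `p = (w, i)`. -/
noncomputable def coeffP (f : ι →₀ MonoidAlgebra k W) (p : Lex (W × ι)) : k :=
  (f (ofLex p).2).coeff (ofLex p).1

/-- The set of monomials of `f`. -/
noncomputable def monsP (f : ι →₀ MonoidAlgebra k W) : Finset (Lex (W × ι)) :=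
  f.support.biUnion fun i => (f i).coeff.support.image fun w => toLex (w, i)

lemma mem_monsP {f : ι →₀ MonoidAlgebra k W} {p : Lex (W × ι)} :
    p ∈ monsP f ↔ coeffP f p ≠ 0 := by
  constructor
  · intro hp
    obtain ⟨i, _, hp⟩ := Finset.mem_biUnion.1 hp
    obtain ⟨w, hw, rfl⟩ := Finset.mem_image.1 hp
    simpa [coeffP] using Finsupp.mem_support_iff.1 hw
  · intro h
    have h2 : f (ofLex p).2 ≠ 0 := fun hc => h (by simp [coeffP, hc])
    exact Finset.mem_biUnion.2 ⟨(ofLex p).2, Finsupp.mem_support_iff.2 h2,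
      Finset.mem_image.2 ⟨(ofLex p).1, Finsupp.mem_support_iff.2 h, rfl⟩⟩

@[simp] lemma coeffP_zero (p : Lex (W × ι)) : coeffP (0 : ι →₀ MonoidAlgebra k W) p = 0 := by
  simp [coeffP]

@[simp] lemma coeffP_sub (f g : ι →₀ MonoidAlgebra k W) (p) :
    coeffP (f - g) p = coeffP f p - coeffP g p := by
  simp only [coeffP, Finsupp.sub_apply]
  exact Finsupp.sub_apply (f (ofLex p).2).coeff (g (ofLex p).2).coeff (ofLex p).1

@[simp] lemma coeffP_add (f g : ι →₀ MonoidAlgebra k W) (p) :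
    coeffP (f + g) p = coeffP f p + coeffP g p := by
  simp only [coeffP, Finsupp.add_apply]
  exact Finsupp.add_apply (f (ofLex p).2).coeff (g (ofLex p).2).coeff (ofLex p).1

lemma monsP_nonempty {f : ι →₀ MonoidAlgebra k W} (h : f ≠ 0) : (monsP f).Nonempty := by
  by_contra hc
  rw [Finset.not_nonempty_iff_eq_empty] at hc
  refine h (Finsupp.ext fun i => MonoidAlgebra.ext (Finsupp.ext fun w => ?_))
  have : toLex (w, i) ∉ monsP f := by rw [hc]; exact Finset.notMem_empty _
  simpa [coeffP] using not_not.1 fun hne => this (mem_monsP.2 (by simpa [coeffP] using hne))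

/-- The leading monomial, as an element of `WithBot`. -/
noncomputable def lmP (f : ι →₀ MonoidAlgebra k W) : WithBot (Lex (W × ι)) := (monsP f).max

lemma le_lmP {f : ι →₀ MonoidAlgebra k W} {p : Lex (W × ι)} (hp : p ∈ monsP f) : (p : WithBot _) ≤ lmP f :=
  Finset.le_max hp

lemma lmP_mem {f : ι →₀ MonoidAlgebra k W} {p : Lex (W × ι)} (hp : lmP f = ↑p) : p ∈ monsP f :=
  Finset.mem_of_max hp

lemma lmP_exists {f : ι →₀ MonoidAlgebra k W} (h : f ≠ 0) : ∃ p : Lex (W × ι), lmP f = ↑p := by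
  obtain ⟨p, hp⟩ := monsP_nonempty h
  obtain ⟨q, hq⟩ := Finset.max_of_mem hp
  exact ⟨q, hq⟩

@[simp] lemma lmP_zero : lmP (0 : ι →₀ MonoidAlgebra k W) = ⊥ := by
  have : monsP (0 : ι →₀ MonoidAlgebra k W) = ∅ := by
    rw [Finset.eq_empty_iff_forall_notMem]
    intro p hp
    exact (mem_monsP.1 hp) (coeffP_zero p)
  simp [lmP, this]

lemma ne_zero_of_lmP {f : ι →₀ MonoidAlgebra k W} {p : Lex (W × ι)} (hp : lmP f = ↑p) : f ≠ 0 := by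
  intro h; rw [h, lmP_zero] at hp; exact (WithBot.bot_ne_coe) hp

section Mono

variable (hl : ∀ (a : W) {x y : W}, x < y → a * x < a * y)
variable (hr : ∀ (a : W) {x y : W}, x < y → x * a < y * a)

include hl hr

lemma pair_mul_lt {u u₀ w w₀ : W} {i i₀ : ι} (hu : u ≤ u₀)
    (hq : toLex (w, i) ≤ toLex (w₀, i₀))
    (hst : u < u₀ ∨ toLex (w, i) < toLex (w₀, i₀)) :
    toLex (u * w, i) < toLex (u₀ * w₀, i₀) := by
  rw [Prod.Lex.le_iff] at hq
  rw [Prod.Lex.lt_iff]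
  rcases hq with hw | ⟨hw, hi⟩
  · left
    calc u * w ≤ u₀ * w := by rcases hu.lt_or_eq with h | rfl; exacts [(hr w h).le, le_rfl]
    _ < u₀ * w₀ := hl u₀ hw
  · subst hw
    rcases hst with hu' | hq'
    · exact Or.inl (hr w hu')
    · rw [Prod.Lex.lt_iff] at hq'
      rcases hq' with h | ⟨_, hi'⟩
      · exact absurd h (lt_irrefl _)
      · rcases hu.lt_or_eq with h | rfl
        · exact Or.inl (hr w h)
        · exact Or.inr ⟨rfl, hi'⟩

lemma pair_mul_le {u u₀ w w₀ : W} {i i₀ : ι} (hu : u ≤ u₀)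
    (hq : toLex (w, i) ≤ toLex (w₀, i₀)) :
    toLex (u * w, i) ≤ toLex (u₀ * w₀, i₀) := by
  rcases hu.lt_or_eq with h | rfl
  · exact (pair_mul_lt hl hr hu hq (Or.inl h)).le
  rcases hq.lt_or_eq with h | h
  · exact (pair_mul_lt hl hr le_rfl hq (Or.inr h)).le
  · have h1 : w = w₀ ∧ i = i₀ := by
      have := congrArg ofLex h
      exact ⟨congrArg Prod.fst this, congrArg Prod.snd this⟩
    rw [h1.1, h1.2]

end Mono

lemma smul_apply_pair (s : MonoidAlgebra k W) (f : ι →₀ MonoidAlgebra k W) (i : ι) :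
    (s • f) i = s * f i := by
  rw [Finsupp.smul_apply]; rfl

lemma coeffP_smul (s : MonoidAlgebra k W) (f : ι →₀ MonoidAlgebra k W) (p) :
    coeffP (s • f) p = (s * f (ofLex p).2).coeff (ofLex p).1 := by
  rw [coeffP, smul_apply_pair]

lemma monsP_smul {s : MonoidAlgebra k W} {f : ι →₀ MonoidAlgebra k W} {p}
    (hp : p ∈ monsP (s • f)) :
    ∃ u ∈ s.coeff.support, ∃ q ∈ monsP f, p = toLex (u * (ofLex q).1, (ofLex q).2) := by
  classical
  have h := mem_monsP.1 hp
  rw [coeffP_smul] at h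
  have hsupp : (ofLex p).1 ∈ (s * f (ofLex p).2).coeff.support := Finsupp.mem_support_iff.2 h
  have := MonoidAlgebra.support_coeff_mul_subset s (f (ofLex p).2) hsupp
  obtain ⟨u, hu, v, hv, huv⟩ := Finset.mem_mul.1 this
  refine ⟨u, hu, toLex (v, (ofLex p).2), mem_monsP.2 ?_, ?_⟩
  · simpa [coeffP] using Finsupp.mem_support_iff.1 hv
  · show p = toLex (u * v, (ofLex p).2)
    rw [huv]
    rfl

lemma monsP_smul_le (hl : ∀ (a : W) {x y : W}, x < y → a * x < a * y)
    (hr : ∀ (a : W) {x y : W}, x < y → x * a < y * a)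
    {s : MonoidAlgebra k W} {f : ι →₀ MonoidAlgebra k W} {u₀ : W} {w₀ : W} {i₀ : ι}
    (hs : ∀ u ∈ s.coeff.support, u ≤ u₀) (hf : ∀ q ∈ monsP f, q ≤ toLex (w₀, i₀))
    {p} (hp : p ∈ monsP (s • f)) : p ≤ toLex (u₀ * w₀, i₀) := by
  obtain ⟨u, hu, q, hq, rfl⟩ := monsP_smul hp
  have : toLex ((ofLex q).1, (ofLex q).2) = q := rfl
  exact pair_mul_le hl hr (hs u hu) (this ▸ hf q hq)

lemma monsP_smul_lt (hl : ∀ (a : W) {x y : W}, x < y → a * x < a * y)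
    (hr : ∀ (a : W) {x y : W}, x < y → x * a < y * a)
    {s : MonoidAlgebra k W} {f : ι →₀ MonoidAlgebra k W} {u₀ : W} {w₀ : W} {i₀ : ι}
    (hs : ∀ u ∈ s.coeff.support, u < u₀) (hf : ∀ q ∈ monsP f, q ≤ toLex (w₀, i₀))
    {p} (hp : p ∈ monsP (s • f)) : p < toLex (u₀ * w₀, i₀) := by
  obtain ⟨u, hu, q, hq, rfl⟩ := monsP_smul hp
  have : toLex ((ofLex q).1, (ofLex q).2) = q := rfl
  exact pair_mul_lt hl hr (hs u hu).le (this ▸ hf q hq) (Or.inl (hs u hu))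

section Gen

variable (N : Submodule (MonoidAlgebra k W) (ι →₀ MonoidAlgebra k W))

/-- Leading monomials of nonzero elements of `N`. -/
def Lset : Set (Lex (W × ι)) := {p | ∃ v ∈ N, lmP v = ↑p}

/-- Leading monomials which are not proper right multiples of other leading monomials. -/
def GenSet : Set (Lex (W × ι)) :=
  {p ∈ Lset N | ∀ u w', (ofLex p).1 = u * w' → toLex (w', (ofLex p).2) ∈ Lset N → u = 1}

variable {N}

lemma exists_gen [WellFoundedLT W]
    (hr : ∀ (a : W) {x y : W}, x < y → x * a < y * a)
    (hone : ∀ w : W, 1 ≤ w) {p : Lex (W × ι)} (hp : p ∈ Lset N) :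
    ∃ q ∈ GenSet N, ∃ u, (ofLex p).1 = u * (ofLex q).1 ∧ (ofLex p).2 = (ofLex q).2 := by
  suffices h : ∀ (w : W) (i : ι), toLex (w, i) ∈ Lset N →
      ∃ q ∈ GenSet N, ∃ u, w = u * (ofLex q).1 ∧ i = (ofLex q).2 by
    exact h (ofLex p).1 (ofLex p).2 hp
  intro w
  induction w using WellFoundedLT.induction with
  | _ w IH =>
    intro i hw
    by_cases hg : toLex (w, i) ∈ GenSet N
    · exact ⟨toLex (w, i), hg, 1, (one_mul w).symm, rfl⟩
    · have : ¬ ∀ u w', w = u * w' → toLex (w', i) ∈ Lset N → u = 1 := fun hc => hg ⟨hw, hc⟩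
      push_neg at this
      obtain ⟨u, w', hww', hL, hu1⟩ := this
      have h1u : 1 < u := lt_of_le_of_ne (hone u) (Ne.symm hu1)
      have hlt : w' < w := by
        have := hr w' h1u
        rwa [one_mul, ← hww'] at this
      obtain ⟨q, hq, u', hwu', hiu'⟩ := IH w' hlt i hL
      exact ⟨q, hq, u * u', by rw [hww', hwu', mul_assoc], hiu'⟩

lemma gen_uniq (hlc : ∀ a b c : W, a * b = a * c → b = c)
    (hlevi : ∀ a b c d : W, a * b = c * d → ∃ t, a = c * t ∨ c = a * t)
    {p p' : Lex (W × ι)} (hp : p ∈ GenSet N) (hp' : p' ∈ GenSet N) {u u' : W}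
    (h1 : u * (ofLex p).1 = u' * (ofLex p').1) (h2 : (ofLex p).2 = (ofLex p').2) :
    p = p' := by
  have hpeta : toLex ((ofLex p).1, (ofLex p).2) = p := rfl
  have hpeta' : toLex ((ofLex p').1, (ofLex p').2) = p' := rfl
  obtain ⟨t, ht | ht⟩ := hlevi u (ofLex p).1 u' (ofLex p').1 h1
  · -- u = u' * t
    rw [ht, mul_assoc] at h1
    have htp : t * (ofLex p).1 = (ofLex p').1 := hlc u' _ _ h1
    have ht1 : t = 1 := by
      refine hp'.2 t (ofLex p).1 htp.symm ?_
      rw [← h2, hpeta]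
      exact hp.1
    rw [ht1, one_mul] at htp
    rw [← hpeta, ← hpeta', htp, h2]
  · -- u' = u * t
    rw [ht, mul_assoc] at h1
    have htp : (ofLex p).1 = t * (ofLex p').1 := (hlc u _ _ h1)
    have ht1 : t = 1 := by
      refine hp.2 t (ofLex p').1 htp ?_
      rw [h2, hpeta']
      exact hp'.1
    rw [ht1, one_mul] at htp
    rw [← hpeta, ← hpeta', htp, h2]

end Gen

lemma single_support_le {u : W} {e : k} {x : W} (hx : x ∈ (MonoidAlgebra.single u e).coeff.support) :
    x = u := by
  have := Finsupp.mem_support_iff.1 hx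
  rw [MonoidAlgebra.single_apply] at this
  by_contra hc
  exact this (if_neg (fun h => hc h.symm))

theorem core_free [WellFoundedLT W] [WellFoundedLT ι]
    (hl : ∀ (a : W) {x y : W}, x < y → a * x < a * y)
    (hr : ∀ (a : W) {x y : W}, x < y → x * a < y * a)
    (hone : ∀ w : W, 1 ≤ w)
    (hlc : ∀ a b c : W, a * b = a * c → b = c)
    (hlevi : ∀ a b c d : W, a * b = c * d → ∃ t, a = c * t ∨ c = a * t)
    (N : Submodule (MonoidAlgebra k W) (ι →₀ MonoidAlgebra k W)) :
    Module.Free (MonoidAlgebra k W) N := by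
  classical
  have hch : ∀ p : GenSet N, ∃ v, v ∈ N ∧ lmP v = ↑(p : Lex (W × ι)) := by
    intro p
    obtain ⟨v, hv, hlm⟩ := p.2.1
    exact ⟨v, hv, hlm⟩
  choose g hgN hglm using hch
  set Sp := Submodule.span (MonoidAlgebra k W) (Set.range g) with hSp
  have hgspan : ∀ p : GenSet N, g p ∈ Sp := fun p => Submodule.subset_span ⟨p, rfl⟩
  -- spanning
  have hNle : ∀ v ∈ N, v ∈ Sp := by
    by_contra hcon
    push_neg at hcon
    obtain ⟨v₀, hv₀N, hv₀⟩ := hcon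
    set A : Set (Lex (W × ι)) := {p | ∃ v ∈ N, v ∉ Sp ∧ lmP v = ↑p} with hA
    have hAne : A.Nonempty := by
      have hv₀0 : v₀ ≠ 0 := fun h => hv₀ (h ▸ Sp.zero_mem)
      obtain ⟨p, hp⟩ := lmP_exists hv₀0
      exact ⟨p, v₀, hv₀N, hv₀, hp⟩
    obtain ⟨p₀, ⟨v, hvN, hvSp, hvlm⟩, hmin⟩ := (wellFounded_lt).has_min A hAne
    have hp₀L : p₀ ∈ Lset N := ⟨v, hvN, hvlm⟩
    obtain ⟨q, hqG, u, hw, hi⟩ := exists_gen hr hone hp₀L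
    set m : ι →₀ MonoidAlgebra k W := g ⟨q, hqG⟩ with hm
    have hqm : q ∈ monsP m := lmP_mem (hglm ⟨q, hqG⟩)
    have hd : coeffP m q ≠ 0 := mem_monsP.1 hqm
    have hp₀v : p₀ ∈ monsP v := lmP_mem hvlm
    have hc0 : coeffP v p₀ ≠ 0 := mem_monsP.1 hp₀v
    set e := coeffP v p₀ * (coeffP m q)⁻¹ with he
    set v' := v - (MonoidAlgebra.single u e) • m with hv'def
    have hterm : coeffP ((MonoidAlgebra.single u e) • m) p₀ = coeffP v p₀ := by
      rw [coeffP_smul]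
      have H : ∀ a : W, u * a = (ofLex p₀).1 ↔ a = (ofLex q).1 := by
        intro a
        constructor
        · intro h; exact hlc u a _ (by rw [h, hw])
        · rintro rfl; exact hw.symm
      rw [MonoidAlgebra.coeff_single_mul_eq_mul_coeff _ (fun a _ => H a), hi]
      show e * coeffP m q = coeffP v p₀
      rw [he, mul_assoc, inv_mul_cancel₀ hd, mul_one]
    have hp₀eq : toLex (u * (ofLex q).1, (ofLex q).2) = p₀ := by
      rw [← hw, ← hi]
      rfl
    have hbound : ∀ pp ∈ monsP ((MonoidAlgebra.single u e) • m), pp ≤ p₀ := by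
      intro pp hpp
      rw [← hp₀eq]
      refine monsP_smul_le hl hr ?_ ?_ hpp
      · intro x hx
        rw [single_support_le hx]
      · intro qq hqq
        have := le_lmP hqq
        rw [hglm ⟨q, hqG⟩] at this
        exact_mod_cast this
    have hv'N : v' ∈ N := Submodule.sub_mem N hvN (Submodule.smul_mem N _ (hgN ⟨q, hqG⟩))
    have htermSp : (MonoidAlgebra.single u e) • m ∈ Sp :=
      Submodule.smul_mem _ _ (hgspan ⟨q, hqG⟩)
    have hv'Sp : v' ∉ Sp := by
      intro h
      refine hvSp ?_
      have hveq : v = v' + (MonoidAlgebra.single u e) • m := by rw [hv'def, sub_add_cancel]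
      rw [hveq]
      exact Sp.add_mem h htermSp
    have hv'0 : v' ≠ 0 := fun h => hv'Sp (h ▸ Sp.zero_mem)
    have hcoeffp₀ : coeffP v' p₀ = 0 := by
      rw [hv'def, coeffP_sub, hterm, sub_self]
    have hmons : ∀ pp ∈ monsP v', pp < p₀ := by
      intro pp hpp
      have hne : coeffP v' pp ≠ 0 := mem_monsP.1 hpp
      have hle : pp ≤ p₀ := by
        by_cases h1 : coeffP v pp = 0
        · have h2 : coeffP ((MonoidAlgebra.single u e) • m) pp ≠ 0 := by
            intro h2
            rw [hv'def, coeffP_sub, h1, h2, sub_zero] at hne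
            exact hne rfl
          exact hbound pp (mem_monsP.2 h2)
        · have hmem : pp ∈ monsP v := mem_monsP.2 h1
          have := le_lmP hmem
          rw [hvlm] at this
          exact_mod_cast this
      have hne₀ : pp ≠ p₀ := by
        intro h
        rw [h, hcoeffp₀] at hne
        exact hne rfl
      exact lt_of_le_of_ne hle hne₀
    obtain ⟨p', hp'⟩ := lmP_exists hv'0
    exact hmin p' ⟨v', hv'N, hv'Sp, hp'⟩ (hmons p' (lmP_mem hp'))
  have hspan_eq : Sp = N :=
    le_antisymm (Submodule.span_le.2 (by rintro _ ⟨p, rfl⟩; exact hgN p)) hNle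
  -- linear independence
  have hli : LinearIndependent (MonoidAlgebra k W) g := by
    rw [linearIndependent_iff]
    intro l hl0
    by_contra hlne
    have hlsne : l.support.Nonempty := Finsupp.support_nonempty_iff.2 hlne
    have hUex : ∀ p : GenSet N, p ∈ l.support → ∃ u : W, (l p).coeff.support.max = ↑u := by
      intro p hp
      obtain ⟨x, hx⟩ := Finsupp.support_nonempty_iff.2 (fun h0 => Finsupp.mem_support_iff.1 hp (MonoidAlgebra.coeff_injective h0))
      obtain ⟨u, hu⟩ := Finset.max_of_mem hx
      exact ⟨u, hu⟩
    choose! U hUspec using hUex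
    set τ : GenSet N → Lex (W × ι) := fun p =>
      toLex (U p * (ofLex (p : Lex (W × ι))).1, (ofLex (p : Lex (W × ι))).2) with hτ
    obtain ⟨phat, hphats, hphatmax⟩ := Finset.exists_max_image l.support τ hlsne
    set π := τ phat with hπ
    have hUmem : ∀ p ∈ l.support, U p ∈ (l p).coeff.support :=
      fun p hp => Finset.mem_of_max (hUspec p hp)
    have hUle : ∀ p ∈ l.support, ∀ x ∈ (l p).coeff.support, x ≤ U p := by
      intro p hp x hx
      have := Finset.le_max hx
      rw [hUspec p hp] at this
      exact_mod_cast this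
    have hglm_le : ∀ (p : GenSet N), ∀ qq ∈ monsP (g p), qq ≤ (p : Lex (W × ι)) := by
      intro p qq hqq
      have := le_lmP hqq
      rw [hglm p] at this
      exact_mod_cast this
    have hmons_le : ∀ p ∈ l.support, ∀ pp ∈ monsP (l p • g p), pp ≤ τ p := by
      intro p hp pp hpp
      exact monsP_smul_le hl hr (hUle p hp) (hglm_le p) hpp
    have hca : ∀ (s : Finset (GenSet N)) (F : GenSet N → ι →₀ MonoidAlgebra k W),
        coeffP (∑ p ∈ s, F p) π = ∑ p ∈ s, coeffP (F p) π := by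
      intro s F
      simp only [coeffP, Finsupp.finset_sum_apply]
      rw [MonoidAlgebra.coeff_sum]
      exact Finsupp.finset_sum_apply _ _ _
    have hsum : coeffP (Finsupp.linearCombination (MonoidAlgebra k W) g l) π
        = coeffP (l phat • g phat) π := by
      rw [Finsupp.linearCombination_apply, Finsupp.sum, hca]
      refine Finset.sum_eq_single_of_mem phat hphats ?_
      intro p hp hne
      rcases lt_or_eq_of_le (hphatmax p hp) with hlt | heq
      · by_contra hc
        have := hmons_le p hp π (mem_monsP.2 hc)
        exact absurd (lt_of_le_of_lt this hlt) (lt_irrefl _)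
      · exfalso
        have h1 : U p * (ofLex (p : Lex (W × ι))).1
            = U phat * (ofLex (phat : Lex (W × ι))).1 := congrArg (fun x => (ofLex x).1) heq
        have h2 : (ofLex (p : Lex (W × ι))).2 = (ofLex (phat : Lex (W × ι))).2 :=
          congrArg (fun x => (ofLex x).2) heq
        exact hne (Subtype.ext (gen_uniq hlc hlevi p.2 phat.2 h1 h2))
    have hhat : coeffP (l phat • g phat) π ≠ 0 := by
      set r := l phat - MonoidAlgebra.single (U phat) ((l phat).coeff (U phat)) with hr_def
      have hrapp : ∀ x : W, r.coeff x = (l phat).coeff x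
          - (MonoidAlgebra.single (U phat) ((l phat).coeff (U phat))).coeff x :=
        fun x => Finsupp.sub_apply (l phat).coeff (MonoidAlgebra.single (U phat) ((l phat).coeff (U phat))).coeff x
      have hrlt : ∀ x ∈ r.coeff.support, x < U phat := by
        intro x hx
        have hxv := Finsupp.mem_support_iff.1 hx
        by_cases hxu : x = U phat
        · exfalso
          apply hxv
          rw [hxu, hrapp, MonoidAlgebra.single_apply, if_pos rfl, sub_self]
        · have hx0 : (l phat).coeff x ≠ 0 := by
            intro h0
            apply hxv
            rw [hrapp, h0, MonoidAlgebra.single_apply, if_neg (fun h => hxu h.symm), sub_zero]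
          exact lt_of_le_of_ne
            (hUle phat hphats x (Finsupp.mem_support_iff.2 hx0)) hxu
      have hdec : l phat = MonoidAlgebra.single (U phat) ((l phat).coeff (U phat)) + r := by
        rw [hr_def]
        abel
      rw [hdec, add_smul, coeffP_add]
      have hsingle : coeffP ((MonoidAlgebra.single (U phat) ((l phat).coeff (U phat))) • g phat) π
          = (l phat).coeff (U phat) * coeffP (g phat) phat := by
        rw [coeffP_smul]
        have H : ∀ a : W, U phat * a = (ofLex π).1 ↔ a = (ofLex (phat : Lex (W × ι))).1 := by
          intro a
          constructor
          · intro h; exact hlc (U phat) a _ h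
          · rintro rfl; rfl
        rw [MonoidAlgebra.coeff_single_mul_eq_mul_coeff _ (fun a _ => H a)]
        rfl
      have herase : coeffP (r • g phat) π = 0 := by
        by_contra hcon
        exact absurd (monsP_smul_lt hl hr hrlt (hglm_le phat) (mem_monsP.2 hcon))
          (lt_irrefl π)
      rw [hsingle, herase, add_zero]
      exact mul_ne_zero (Finsupp.mem_support_iff.1 (hUmem phat hphats))
        (mem_monsP.1 (lmP_mem (hglm phat)))
    rw [hl0, coeffP_zero] at hsum
    exact hhat hsum.symm
  exact Module.Free.of_basis ((Module.Basis.span hli).map (LinearEquiv.ofEq _ _ hspan_eq))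

end Core

section Glue

/-- Reversal gives a multiplicative isomorphism between the opposite of a free
monoid and the free monoid itself. -/
def freeMonoidOpEquiv {X : Type*} : (FreeMonoid X)ᵐᵒᵖ ≃* FreeMonoid X where
  toFun w := FreeMonoid.ofList (FreeMonoid.toList w.unop).reverse
  invFun w := MulOpposite.op (FreeMonoid.ofList (FreeMonoid.toList w).reverse)
  left_inv w := by simp [FreeMonoid.toList_ofList, FreeMonoid.ofList_toList]
  right_inv w := by simp [FreeMonoid.toList_ofList, FreeMonoid.ofList_toList]
  map_mul' a b := by
    apply FreeMonoid.toList.injective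
    simp [FreeMonoid.toList_mul, FreeMonoid.toList_ofList, MulOpposite.unop_mul,
      List.reverse_append]

end Glue

/-- Every submodule of a free right module over the free associative algebra
`k⟨X⟩` is free. -/
theorem submodule_free_over_freeAlgebra
    (k : Type*) [Field k] (X : Type*)
    (M : Type*) [AddCommGroup M] [Module (FreeAlgebra k X)ᵐᵒᵖ M]
    [Module.Free (FreeAlgebra k X)ᵐᵒᵖ M]
    (N : Submodule (FreeAlgebra k X)ᵐᵒᵖ M) :
    Module.Free (FreeAlgebra k X)ᵐᵒᵖ N := by
  classical
  letI : LinearOrder X := IsWellOrder.linearOrder WellOrderingRel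
  haveI : WellFoundedLT X := ⟨WellOrderingRel.isWellOrder.wf⟩
  haveI hWFM : WellFoundedLT (FreeMonoid X) := shortLex_wellFoundedLT
  set R := (FreeAlgebra k X)ᵐᵒᵖ
  set S := MonoidAlgebra kᵐᵒᵖ (FreeMonoid X) with hS
  let E : S ≃+* R :=
    ((MonoidAlgebra.domCongr kᵐᵒᵖ kᵐᵒᵖ
        (freeMonoidOpEquiv (X := X))).symm.toRingEquiv.trans
      (MonoidAlgebra.opRingEquiv (R := k) (M := FreeMonoid X)).symm).trans
      ((RingEquiv.op (FreeAlgebra.equivMonoidAlgebraFreeMonoid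
        (R := k) (X := X)).toRingEquiv).symm)
  letI : Module S M := Module.compHom M E.toRingHom
  let χ := Module.Free.ChooseBasisIndex R M
  letI : LinearOrder χ := IsWellOrder.linearOrder WellOrderingRel
  haveI : WellFoundedLT χ := ⟨WellOrderingRel.isWellOrder.wf⟩
  let b : Module.Basis χ R M := Module.Free.chooseBasis R M
  let b' : Module.Basis χ S M := b.mapCoeffs E.symm (fun c x => by
    show E (E.symm c) • x = c • x
    rw [E.apply_symm_apply])
  let N' : Submodule S M :=
    { carrier := N
      add_mem' := fun ha hb => N.add_mem ha hb
      zero_mem' := N.zero_mem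
      smul_mem' := fun s x hx => N.smul_mem (E s) hx }
  let N'' : Submodule S (χ →₀ S) := N'.map (b'.repr : M →ₗ[S] (χ →₀ S))
  haveI hfree'' : Module.Free S N'' := by
    refine core_free ?_ ?_ ?_ ?_ ?_ N''
    · exact fun a _ _ h => shortLex_mul_lt_mul_left a h
    · exact fun a _ _ h => shortLex_mul_lt_mul_right a h
    · exact shortLex_one_le
    · exact fun a b c h => freeMonoid_mul_left_cancel h
    · exact fun a b c d h => freeMonoid_levi h
  haveI hfree' : Module.Free S N' :=
    Module.Free.of_equiv (b'.repr.submoduleMap N').symm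
  let c := Module.Free.chooseBasis S N'
  letI : Module S ↥N := Module.compHom ↥N E.toRingHom
  let idEquiv : N' ≃ₗ[S] ↥N :=
    { toFun := fun x => ⟨x.1, x.2⟩
      invFun := fun x => ⟨x.1, x.2⟩
      map_add' := fun _ _ => rfl
      map_smul' := fun _ _ => rfl
      left_inv := fun _ => rfl
      right_inv := fun _ => rfl }
  let c' : Module.Basis _ S ↥N := c.map idEquiv
  let c'' : Module.Basis _ R ↥N := c'.mapCoeffs E (fun s x => rfl)
  exact Module.Free.of_basis c''
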